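/- Every finite non-solvable group has a maximal subgroup that is non-nilpotent and non-normal. -/

import Mathlib

open Subgroup Pointwise

namespace NSW



variable {G : Type*} [Group G]

/-- Conjugate of a subgroup. -/
def cj (g : G) (H : Subgroup G) : Subgroup G := H.map (MulAut.conj g).toMonoidHom

lemma mem_cj {g x : G} {H : Subgroup G} : x ∈ cj g H ↔ g⁻¹ * x * g ∈ H := by
  constructor
  · rintro ⟨y, hy, rfl⟩
    simpa [MulAut.conj_apply, mul_assoc] using hy
  · intro h
    exact ⟨g⁻¹ * x * g, h, by simp [MulAut.conj_apply, mul_assoc]⟩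

lemma cj_cj (g h : G) (H : Subgroup G) : cj g (cj h H) = cj (g * h) H := by
  ext x; simp [mem_cj, mul_assoc]

lemma cj_one (H : Subgroup G) : cj 1 H = H := by ext x; simp [mem_cj]

lemma cj_mono {g : G} {H K : Subgroup G} (h : H ≤ K) : cj g H ≤ cj g K := by
  intro x hx; rw [mem_cj] at *; exact h hx

lemma cj_inv_cj (g : G) (H : Subgroup G) : cj g⁻¹ (cj g H) = H := by
  rw [cj_cj, inv_mul_cancel, cj_one]

lemma cj_le_cj {g : G} {H K : Subgroup G} : cj g H ≤ cj g K ↔ H ≤ K := by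
  refine ⟨fun h => ?_, cj_mono⟩
  have := cj_mono (g := g⁻¹) h
  rwa [cj_inv_cj, cj_inv_cj] at this

lemma cj_inj {g : G} {H K : Subgroup G} (h : cj g H = cj g K) : H = K :=
  le_antisymm (cj_le_cj.mp h.le) (cj_le_cj.mp h.ge)

lemma cj_top (g : G) : cj g (⊤ : Subgroup G) = ⊤ := by
  ext x; simp [mem_cj]

lemma cj_inf (g : G) (H K : Subgroup G) : cj g (H ⊓ K) = cj g H ⊓ cj g K := by
  ext x; simp [mem_cj, Subgroup.mem_inf]

lemma cj_eq_self_of_normal {g : G} {H : Subgroup G} (h : H.Normal) : cj g H = H := by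
  ext x
  rw [mem_cj]
  constructor
  · intro hx
    simpa [mul_assoc] using h.conj_mem _ hx g
  · intro hx
    simpa [mul_assoc] using h.conj_mem _ hx g⁻¹

lemma card_cj (g : G) (H : Subgroup G) : Nat.card (cj g H) = Nat.card H := by
  unfold cj
  rw [eq_comm]
  exact Nat.card_congr (H.equivMapOfInjective _ (MulAut.conj g).injective).toEquiv

lemma isCoatom_cj {g : G} {H : Subgroup G} (h : IsCoatom H) : IsCoatom (cj g H) := by
  constructor
  · intro htop
    apply h.1
    have := congrArg (cj g⁻¹) htop
    rwa [cj_inv_cj, cj_top] at this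
  · intro B hB
    have hlt : H < cj g⁻¹ B := by
      constructor
      · have := cj_mono (g := g⁻¹) hB.le
        rwa [cj_inv_cj] at this
      · intro hle
        have := cj_mono (g := g) hle
        rw [cj_cj, mul_inv_cancel, cj_one] at this
        exact hB.not_ge this
    have := h.2 _ hlt
    have := congrArg (cj g) this
    rwa [cj_cj, mul_inv_cancel, cj_one, cj_top] at this

lemma cj_normalizer (g : G) (H : Subgroup G) : normalizer ((cj g H) : Set G) = cj g (normalizer (H : Set G)) := by
  unfold cj
  rw [Subgroup.map_equiv_normalizer_eq]




variable {G : Type*} [Group G]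

/-- Normalizer growth in a finite nilpotent subgroup. -/
lemma exists_normalizer_growth [Finite G] {A D : Subgroup G}
    (hA : Group.IsNilpotent ↥A) (h : D < A) :
    ∃ x : G, x ∈ A ∧ x ∉ D ∧ x ∈ normalizer (D : Set G) := by
  have hDA : D ≤ A := h.le
  have hnc : NormalizerCondition ↥A := @normalizerCondition_of_isNilpotent _ _ hA
  have hne : D.subgroupOf A ≠ ⊤ := by
    intro htop
    rw [Subgroup.subgroupOf_eq_top] at htop
    exact h.not_ge htop
  have hlt := hnc (D.subgroupOf A) (lt_top_iff_ne_top.mpr hne)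
  obtain ⟨x, hx1, hx2⟩ := SetLike.exists_of_lt hlt
  have hiff := Subgroup.mem_normalizer_iff.mp hx1
  refine ⟨(x : G), x.2, ?_, ?_⟩
  · intro hmem
    exact hx2 (by simpa [Subgroup.mem_subgroupOf] using hmem)
  · rw [Subgroup.mem_normalizer_iff]
    intro h'
    constructor
    · intro hh'
      have hh'A : h' ∈ A := hDA hh'
      have h1 : (⟨h', hh'A⟩ : ↥A) ∈ D.subgroupOf A := by
        simpa [Subgroup.mem_subgroupOf] using hh'
      have := (hiff _).mp h1
      simpa [Subgroup.mem_subgroupOf] using this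
    · intro hh'
      have hxh : (x : G) * h' * (x : G)⁻¹ ∈ A := hDA hh'
      have hh'A : h' ∈ A := by
        have := mul_mem (mul_mem (A.inv_mem x.2) hxh) x.2
        simpa [mul_assoc] using this
      have hmem : x * (⟨h', hh'A⟩ : ↥A) * x⁻¹ ∈ D.subgroupOf A := by
        rw [Subgroup.mem_subgroupOf]
        simpa using hh'
      have := (hiff _).mpr hmem
      simpa [Subgroup.mem_subgroupOf] using this

/-- If `S` is a normal subgroup of `↥L`, then `L` normalizes the image of `S` in `G`. -/
lemma le_normalizer_map' {L : Subgroup G} {S : Subgroup ↥L} (hS : S.Normal) :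
    L ≤ normalizer ((S.map L.subtype) : Set G) := by
  intro x hx
  rw [Subgroup.mem_normalizer_iff]
  intro h
  constructor
  · rintro ⟨s, hs, rfl⟩
    exact ⟨⟨x, hx⟩ * s * ⟨x, hx⟩⁻¹, hS.conj_mem s hs ⟨x, hx⟩, rfl⟩
  · rintro ⟨s, hs, heq⟩
    have hsx : (s : G) = x * h * x⁻¹ := by rw [← heq]; rfl
    refine ⟨(⟨x, hx⟩ : ↥L)⁻¹ * s * ⟨x, hx⟩⁻¹⁻¹, hS.conj_mem s hs ⟨x, hx⟩⁻¹, ?_⟩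
    show ((⟨x, hx⟩ : ↥L)⁻¹ * s * ⟨x, hx⟩⁻¹⁻¹ : ↥L) = (h : G)
    push_cast
    rw [hsx]
    group

/-- In a finite nilpotent group, each Sylow subgroup is normal. -/
lemma sylow_normal_of_nilpotent {H : Type*} [Group H] [Finite H]
    (h : Group.IsNilpotent H) {q : ℕ} [Fact q.Prime] (S : Sylow q H) :
    (S : Subgroup H).Normal :=
  Sylow.normal_of_normalizerCondition (@normalizerCondition_of_isNilpotent _ _ h) S

/-- Any `q`-subgroup of a finite nilpotent subgroup `L` is contained in (the image of) the
Sylow `q`-subgroup of `L`. -/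
lemma pgroup_le_sylow_map [Finite G] {L : Subgroup G} (hL : Group.IsNilpotent ↥L)
    {q : ℕ} [Fact q.Prime] (S : Sylow q ↥L) {X : Subgroup G} (hXL : X ≤ L)
    (hX : IsPGroup q ↥X) : X ≤ S.toSubgroup.map L.subtype := by
  have hX' : IsPGroup q ↥(X.subgroupOf L) :=
    hX.of_equiv (Subgroup.subgroupOfEquivOfLe hXL).symm
  obtain ⟨Q, hQ⟩ := hX'.exists_le_sylow
  haveI : Subsingleton (Sylow q ↥L) :=
    haveI := Sylow.unique_of_normal S (sylow_normal_of_nilpotent hL S)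
    inferInstance
  have hQS : Q = S := Subsingleton.elim _ _
  intro x hx
  have : (⟨x, hXL hx⟩ : ↥L) ∈ (S : Subgroup ↥L) := by
    rw [← hQS]
    exact hQ (by simpa [Subgroup.mem_subgroupOf] using hx)
  exact ⟨_, this, rfl⟩

/-- Nilpotency transfers to sub-subgroups. -/
lemma isNilpotent_of_le [Finite G] {K L : Subgroup G} (h : K ≤ L)
    (hL : Group.IsNilpotent ↥L) : Group.IsNilpotent ↥K := by
  haveI := hL
  have e := Subgroup.subgroupOfEquivOfLe h
  exact nilpotent_of_mulEquiv e

/-- A nontrivial normal subgroup of a group all of whose nontrivial normal subgroups are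
non-solvable is not a `p`-group. -/
lemma not_pgroup_of_norm [Finite G] {K : Subgroup G}
    (hns : ¬ IsSolvable ↥K) {q : ℕ} (hq : q.Prime) (h : IsPGroup q ↥K) : False := by
  haveI : Fact q.Prime := ⟨hq⟩
  haveI := h.isNilpotent
  exact hns (inferInstance : Group.IsSolvable ↥K)

lemma card_map_subtype {L : Subgroup G} (S : Subgroup ↥L) :
    Nat.card (S.map L.subtype) = Nat.card S :=
  (Nat.card_congr (S.equivMapOfInjective _ L.subtype_injective).toEquiv).symm




variable {G : Type*} [Group G]

lemma mem_normalizer_inf {x : G} {A B : Subgroup G}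
    (ha : x ∈ normalizer (A : Set G)) (hb : x ∈ normalizer (B : Set G)) : x ∈ normalizer ((A ⊓ B : Subgroup G) : Set G) := by
  rw [Subgroup.mem_normalizer_iff] at *
  intro h
  rw [Subgroup.mem_inf, Subgroup.mem_inf, ← ha h, ← hb h]

lemma normalizer_eq_of_coatom {L H : Subgroup G} (hL : IsCoatom L)
    (hle : L ≤ normalizer (H : Set G)) (hne : normalizer (H : Set G) ≠ ⊤) : normalizer (H : Set G) = L := by
  rcases eq_or_lt_of_le hle with h | h
  · exact h.symm
  · exact absurd (hL.2 _ h) hne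

lemma card_inf_mul_index [Finite G] {N L : Subgroup G} [hN : N.Normal] (h : N ⊔ L = ⊤) :
    Nat.card L = Nat.card ↥(N ⊓ L) * N.index := by
  have h1 : N.relIndex L = N.index := by
    have := Subgroup.relIndex_sup_right L N
    rw [sup_comm] at h
    rw [h, Subgroup.relIndex_top_right] at this
    exact this.symm
  have h2 : Nat.card (N.subgroupOf L) * (N.subgroupOf L).index = Nat.card L :=
    Subgroup.card_mul_index _
  have h3 : (N.subgroupOf L).index = N.relIndex L := rfl
  have h4 : Nat.card (N.subgroupOf L) = Nat.card ↥(N ⊓ L) := by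
    rw [← Subgroup.inf_subgroupOf_right]
    exact Nat.card_congr (Subgroup.subgroupOfEquivOfLe inf_le_right).toEquiv
  rw [← h2, h3, h1, h4]

/-- Key lemma: if `L` is a nilpotent coatom, `N` a nontrivial normal subgroup, and
`q` divides `|N ⊓ L|`, then some full Sylow `q`-subgroup of `N` lies in `L` and has
normalizer exactly `L`. -/
lemma key3 [Finite G]
    (hns : ∀ K : Subgroup G, K.Normal → K ≠ ⊥ → ¬ IsSolvable ↥K)
    {N L : Subgroup G} [hNn : N.Normal] (_hNbot : N ≠ ⊥)
    (hL : IsCoatom L) (hLnil : Group.IsNilpotent ↥L)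
    {q : ℕ} [hqp : Fact q.Prime] (hq : q ∣ Nat.card ↥(N ⊓ L)) :
    ∃ Q : Sylow q ↥N, Q.toSubgroup.map N.subtype ≤ L ∧
      normalizer ((Q.toSubgroup.map N.subtype) : Set G) = L := by
  classical
  set T := N ⊓ L with hT
  obtain Sq : Sylow q ↥L := default
  have hSqn : (Sq : Subgroup ↥L).Normal := sylow_normal_of_nilpotent hLnil Sq
  set SG := Sq.toSubgroup.map L.subtype with hSG
  have hSGL : SG ≤ L := Subgroup.map_subtype_le _
  have hSGpg : IsPGroup q ↥SG := Sq.isPGroup'.map L.subtype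
  have hLnorm : L ≤ normalizer (SG : Set G) := le_normalizer_map' hSqn
  -- a nontrivial q-subgroup of T
  obtain St : Sylow q ↥T := default
  have hStpos : 0 < (Nat.card ↥T).factorization q :=
    hqp.out.factorization_pos_of_dvd Nat.card_pos.ne' hq
  have hStcard : Nat.card St.toSubgroup = q ^ (Nat.card ↥T).factorization q :=
    St.card_eq_multiplicity
  have hStne : St.toSubgroup.map T.subtype ≠ ⊥ := by
    rw [← Subgroup.one_lt_card_iff_ne_bot, card_map_subtype, hStcard]
    exact one_lt_pow₀ hqp.out.one_lt hStpos.ne'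
  have hStT : St.toSubgroup.map T.subtype ≤ T := Subgroup.map_subtype_le _
  have hStL : St.toSubgroup.map T.subtype ≤ L := hStT.trans inf_le_right
  have hStpg : IsPGroup q ↥(St.toSubgroup.map T.subtype) := St.isPGroup'.map T.subtype
  have hXSG : St.toSubgroup.map T.subtype ≤ SG := pgroup_le_sylow_map hLnil Sq hStL hStpg
  set Q0 := SG ⊓ N with hQ0
  have hQ0ne : Q0 ≠ ⊥ := by
    intro hbot
    apply hStne
    rw [eq_bot_iff] at hbot ⊢
    exact (le_inf hXSG (hStT.trans inf_le_left)).trans hbot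
  have hQ0pg : IsPGroup q ↥Q0 := hSGpg.to_le inf_le_left
  have hQ0N : Q0 ≤ N := inf_le_right
  have hQ0le : L ≤ normalizer (Q0 : Set G) := by
    intro x hx
    refine mem_normalizer_inf (hLnorm hx) ?_
    rw [Subgroup.normalizer_eq_top_iff.mpr hNn]
    trivial
  have hQ0netop : normalizer (Q0 : Set G) ≠ ⊤ := by
    intro htop
    haveI : Q0.Normal := Subgroup.normalizer_eq_top_iff.mp htop
    exact not_pgroup_of_norm (hns Q0 this hQ0ne) hqp.out hQ0pg
  have hQ0normalizer : normalizer (Q0 : Set G) = L := normalizer_eq_of_coatom hL hQ0le hQ0netop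
  -- fullness of Q0 in N
  have hQ0pg' : IsPGroup q ↥(Q0.subgroupOf N) := hQ0pg.of_equiv (subgroupOfEquivOfLe hQ0N).symm
  obtain ⟨Q, hQle⟩ := hQ0pg'.exists_le_sylow
  have hQ0QG : Q0 ≤ Q.toSubgroup.map N.subtype := by
    intro x hx
    exact ⟨⟨x, hQ0N hx⟩, hQle (by rwa [Subgroup.mem_subgroupOf]), rfl⟩
  have hQGN : Q.toSubgroup.map N.subtype ≤ N := Subgroup.map_subtype_le _
  have heq : Q0 = Q.toSubgroup.map N.subtype := by
    by_contra hne
    have hlt : Q0 < Q.toSubgroup.map N.subtype := hQ0QG.lt_of_ne hne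
    have hQGnil : Group.IsNilpotent ↥(Q.toSubgroup.map N.subtype) :=
      (Q.isPGroup'.map N.subtype).isNilpotent
    obtain ⟨x, hxQG, hxQ0, hxnorm⟩ := exists_normalizer_growth hQGnil hlt
    have hxL : x ∈ L := by rw [← hQ0normalizer]; exact hxnorm
    have hzpg : IsPGroup q ↥(Subgroup.zpowers x) :=
      (Q.isPGroup'.map N.subtype).to_le ((Subgroup.zpowers_le).mpr hxQG)
    have hzS : Subgroup.zpowers x ≤ SG :=
      pgroup_le_sylow_map hLnil Sq ((Subgroup.zpowers_le).mpr hxL) hzpg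
    exact hxQ0 ⟨hzS (Subgroup.mem_zpowers x), hQGN hxQG⟩
  refine ⟨Q, ?_, ?_⟩
  · rw [← heq]; exact inf_le_left.trans hSGL
  · rw [← heq]; exact hQ0normalizer


lemma cj_eq_self_iff {g : G} {A : Subgroup G} : cj g A = A ↔ g ∈ normalizer (A : Set G) := by
  constructor
  · intro h
    rw [Subgroup.mem_normalizer_iff]
    intro x
    have h1 : g * x * g⁻¹ ∈ cj g A ↔ x ∈ A := by
      rw [mem_cj]
      have hx : g⁻¹ * (g * x * g⁻¹) * g = x := by group
      rw [hx]
    rw [h] at h1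
    exact h1.symm
  · intro h
    ext x
    rw [mem_cj]
    have h1 := Subgroup.mem_normalizer_iff.mp h (g⁻¹ * x * g)
    have hx : g * (g⁻¹ * x * g) * g⁻¹ = x := by group
    rw [hx] at h1
    exact h1

/-- Case I: no nontrivial proper normal subgroups. -/
lemma caseI [Finite G] (hG : ¬ IsSolvable G)
    (hsimple : ∀ K : Subgroup G, K.Normal → K = ⊥ ∨ K = ⊤)
    (hC : ∀ M : Subgroup G, IsCoatom M → Group.IsNilpotent ↥M ∨ M.Normal) : False := by
  classical
  rcases subsingleton_or_nontrivial G with hs | hs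
  · exact hG (inferInstance : Group.IsSolvable G)
  have hnc : ∀ x : G, Subgroup.zpowers x ≠ ⊤ := by
    intro x h
    have : IsCyclic G := ⟨⟨x, fun y => by
      have hy : y ∈ (⊤ : Subgroup G) := trivial
      rwa [← h] at hy⟩⟩
    letI := this.commGroup
    exact hG (inferInstance : Group.IsSolvable G)
  have hnonbot : ∀ M : Subgroup G, IsCoatom M → M ≠ ⊥ := by
    rintro M hM rfl
    obtain ⟨x, hx⟩ := exists_ne (1 : G)
    have h1 : (⊥ : Subgroup G) < Subgroup.zpowers x := by
      rw [bot_lt_iff_ne_bot, ne_eq, Subgroup.zpowers_eq_bot]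
      exact hx
    exact hnc x (hM.2 _ h1)
  have hnn : ∀ M : Subgroup G, IsCoatom M → ¬ M.Normal := by
    intro M hM hnorm
    rcases hsimple M hnorm with h | h
    · exact hnonbot M hM h
    · exact hM.1 h
  have hnil : ∀ M : Subgroup G, IsCoatom M → Group.IsNilpotent ↥M := by
    intro M hM
    rcases hC M hM with h | h
    · exact h
    · exact absurd h (hnn M hM)
  have hsn : ∀ M : Subgroup G, IsCoatom M → normalizer (M : Set G) = M := by
    intro M hM
    rcases eq_or_lt_of_le (Subgroup.le_normalizer (H := M)) with h | h
    · exact h.symm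
    · exact absurd (Subgroup.normalizer_eq_top_iff.mp (hM.2 _ h)) (hnn M hM)
  haveI : Finite (Subgroup G) :=
    Finite.of_injective (fun H : Subgroup G => (H : Set G)) SetLike.coe_injective
  -- trivial intersections
  have hTI : ∀ A B : Subgroup G, IsCoatom A → IsCoatom B → A ≠ B → A ⊓ B = ⊥ := by
    by_contra hcon
    push_neg at hcon
    set S : Set (Subgroup G) :=
      {D | D ≠ ⊥ ∧ ∃ A B : Subgroup G, IsCoatom A ∧ IsCoatom B ∧ A ≠ B ∧ D = A ⊓ B} with hSdef
    have hne : S.Nonempty := by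
      obtain ⟨A, B, hA, hB, hAB, hD⟩ := hcon
      exact ⟨A ⊓ B, hD, A, B, hA, hB, hAB, rfl⟩
    obtain ⟨D, hDS, hmax⟩ :=
      Set.Finite.exists_maximalFor (fun D : Subgroup G => Nat.card ↥D) S (Set.toFinite S) hne
    obtain ⟨hDbot, A, B, hA, hB, hAB, rfl⟩ := hDS
    have hlt : ∀ {X Y : Subgroup G}, IsCoatom X → IsCoatom Y → X ≠ Y → X ⊓ Y < X := by
      intro X Y hX hY hXY
      refine lt_of_le_of_ne inf_le_left (fun h => ?_)
      have hXle : X ≤ Y := by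
        conv_lhs => rw [← h]
        exact inf_le_right
      rcases eq_or_lt_of_le hXle with h' | h'
      · exact hXY h'
      · exact hY.1 (hX.2 _ h')
    obtain ⟨xA, hxA, hxAD, hxAn⟩ :=
      exists_normalizer_growth (hnil A hA) (hlt hA hB hAB)
    have hBside : A ⊓ B < B := by rw [inf_comm]; exact hlt hB hA (Ne.symm hAB)
    obtain ⟨xB, hxB, hxBD, hxBn⟩ := exists_normalizer_growth (hnil B hB) hBside
    have hnt : normalizer ((A ⊓ B : Subgroup G) : Set G) ≠ ⊤ := by
      intro htop
      rcases hsimple _ (Subgroup.normalizer_eq_top_iff.mp htop) with h | h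
      · exact hDbot h
      · exact hA.1 (top_le_iff.mp (h ▸ inf_le_left))
    have hex := (eq_top_or_exists_le_coatom (normalizer ((A ⊓ B : Subgroup G) : Set G))).resolve_left hnt
    obtain ⟨C, hCco, hCle⟩ := hex
    by_cases hCA : C = A
    · subst hCA
      exact hxBD ⟨hCle hxBn, hxB⟩
    · have hDle : A ⊓ B ≤ C ⊓ A :=
        le_inf (Subgroup.le_normalizer.trans hCle) inf_le_left
      have hmem : C ⊓ A ∈ S := by
        refine ⟨fun h => hDbot (le_bot_iff.mp (h ▸ hDle)), C, A, hCco, hA, hCA, rfl⟩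
      have hcard := hmax hmem (Subgroup.card_le_of_le hDle)
      have heq : A ⊓ B = C ⊓ A :=
        Subgroup.eq_of_le_of_card_ge hDle hcard
      apply hxAD
      rw [heq]
      exact ⟨hCle hxAn, hxA⟩
  -- every nontrivial element lies in a coatom
  have hUC : ∀ x : G, x ≠ 1 → ∃ M : Subgroup G, IsCoatom M ∧ x ∈ M := by
    intro x hx
    rcases eq_top_or_exists_le_coatom (Subgroup.zpowers x) with h | h
    · exact absurd h (hnc x)
    · obtain ⟨M, hM, hle⟩ := h
      exact ⟨M, hM, hle (Subgroup.mem_zpowers x)⟩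
  -- the union of all conjugates of a coatom, minus the identity
  set U : Subgroup G → Set G :=
    fun A => (⋃ g : G, ((cj g A : Subgroup G) : Set G)) \ {1} with hUdef
  have hmemU : ∀ (A : Subgroup G) (y : G),
      y ∈ U A ↔ (∃ g : G, g⁻¹ * y * g ∈ A) ∧ y ≠ 1 := by
    intro A y
    simp only [hUdef, Set.mem_diff, Set.mem_iUnion, SetLike.mem_coe, Set.mem_singleton_iff]
    constructor
    · rintro ⟨⟨g, hg⟩, hy⟩
      exact ⟨⟨g, mem_cj.mp hg⟩, hy⟩
    · rintro ⟨⟨g, hg⟩, hy⟩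
      exact ⟨⟨g, mem_cj.mpr hg⟩, hy⟩
  have hone : ∀ A : Subgroup G, (1 : G) ∉ U A := by
    intro A h
    exact ((hmemU A 1).mp h).2 rfl
  -- cardinality computation
  have hcardU : ∀ A : Subgroup G, IsCoatom A → (U A).ncard + A.index = Nat.card G := by
    intro A hA
    have hfin : (U A).Finite := Set.toFinite _
    -- bijection from (G ⧸ A) × (A \ {1}) to U A
    let T := (G ⧸ A) × ↥((A : Set G) \ {1})
    let f : T → ↥(U A) := fun p =>
      ⟨p.1.out * (p.2 : G) * p.1.out⁻¹, by
        rw [hmemU]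
        have hp2 := p.2.2
        rw [Set.mem_diff, Set.mem_singleton_iff] at hp2
        constructor
        · refine ⟨p.1.out, ?_⟩
          have hc : p.1.out⁻¹ * (p.1.out * (p.2 : G) * p.1.out⁻¹) * p.1.out = (p.2 : G) := by
            group
          rw [hc]
          exact hp2.1
        · intro h
          apply hp2.2
          have := congrArg (fun z => p.1.out⁻¹ * z * p.1.out) h
          simpa [mul_assoc] using this⟩
    have hfbij : Function.Bijective f := by
      constructor
      · rintro ⟨q, a⟩ ⟨q', a'⟩ hf
        have hfeq : q.out * (a : G) * q.out⁻¹ = q'.out * (a' : G) * q'.out⁻¹ :=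
          congrArg Subtype.val hf
        have ha := a.2; have ha' := a'.2
        rw [Set.mem_diff, Set.mem_singleton_iff] at ha ha'
        have hy1 : q.out * (a : G) * q.out⁻¹ ∈ cj q.out A := by
          rw [mem_cj]
          have hc : q.out⁻¹ * (q.out * (a : G) * q.out⁻¹) * q.out = (a : G) := by group
          rw [hc]; exact ha.1
        have hy2 : q.out * (a : G) * q.out⁻¹ ∈ cj q'.out A := by
          rw [hfeq, mem_cj]
          have hc : q'.out⁻¹ * (q'.out * (a' : G) * q'.out⁻¹) * q'.out = (a' : G) := by group
          rw [hc]; exact ha'.1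
        have hyne : q.out * (a : G) * q.out⁻¹ ≠ 1 := by
          intro h
          apply ha.2
          have := congrArg (fun z => q.out⁻¹ * z * q.out) h
          simpa [mul_assoc] using this
        have hcjeq : cj q.out A = cj q'.out A := by
          by_contra hne'
          have := hTI _ _ (isCoatom_cj hA) (isCoatom_cj hA) hne'
          have hmem : q.out * (a : G) * q.out⁻¹ ∈ cj q.out A ⊓ cj q'.out A := ⟨hy1, hy2⟩
          rw [this, Subgroup.mem_bot] at hmem
          exact hyne hmem
        have hnrm : q'.out⁻¹ * q.out ∈ normalizer (A : Set G) := by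
          rw [← hsn A hA] at *
          rw [← cj_eq_self_iff]
          rw [← cj_cj, hcjeq, cj_inv_cj]
        rw [hsn A hA] at hnrm
        have hqq : q = q' := by
          have hqe : (q'.out : G ⧸ A) = (q.out : G ⧸ A) := (QuotientGroup.eq).mpr hnrm
          rw [← Quotient.out_eq q, ← Quotient.out_eq q']
          exact hqe.symm
        subst hqq
        have haa : (a : G) = (a' : G) := by
          have h1 := mul_right_cancel hfeq
          exact mul_left_cancel h1
        exact Prod.ext rfl (Subtype.ext haa)
      · rintro ⟨y, hy⟩
        rw [hmemU] at hy
        obtain ⟨⟨g, hg⟩, hyne⟩ := hy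
        set q : G ⧸ A := (g : G ⧸ A) with hq
        have hb : g⁻¹ * q.out ∈ A := by
          rw [← QuotientGroup.eq, ← hq]
          exact (Quotient.out_eq q).symm
        set a : G := q.out⁻¹ * y * q.out with haa
        have haA : a ∈ A := by
          have hrw : a = (g⁻¹ * q.out)⁻¹ * (g⁻¹ * y * g) * (g⁻¹ * q.out) := by
            rw [haa]; group
          rw [hrw]
          exact A.mul_mem (A.mul_mem (A.inv_mem hb) hg) hb
        have hane : a ≠ 1 := by
          rw [haa]
          intro h
          apply hyne
          have := congrArg (fun z => q.out * z * q.out⁻¹) h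
          simpa [mul_assoc] using this
        refine ⟨⟨q, ⟨a, ?_⟩⟩, ?_⟩
        · rw [Set.mem_diff, Set.mem_singleton_iff]
          exact ⟨haA, hane⟩
        · apply Subtype.ext
          show q.out * a * q.out⁻¹ = y
          rw [haa]; group
    have hcards : Nat.card T = Nat.card ↥(U A) := Nat.card_eq_of_bijective f hfbij
    have hT : Nat.card T = A.index * (Nat.card ↥A - 1) := by
      have h1 : ((A : Set G) \ {1}).ncard = (A : Set G).ncard - 1 :=
        Set.ncard_diff_singleton_of_mem A.one_mem
      have h2 : (A : Set G).ncard = Nat.card ↥A := by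
        rw [← Nat.card_coe_set_eq]
        rfl
      have h3 : Nat.card ↥((A : Set G) \ {1}) = Nat.card ↥A - 1 := by
        rw [Nat.card_coe_set_eq, h1, h2]
      rw [Nat.card_prod, h3]
      rfl
    have hAcard : Nat.card ↥A * A.index = Nat.card G := A.card_mul_index
    have hApos : 1 ≤ Nat.card ↥A := Nat.card_pos
    have hUn : (U A).ncard = Nat.card ↥(U A) := Nat.card_coe_set_eq _ |>.symm
    rw [hUn, ← hcards, hT]
    have : A.index * (Nat.card ↥A - 1) + A.index = A.index * (Nat.card ↥A - 1 + 1) := by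
      ring
    rw [this, Nat.sub_add_cancel hApos, mul_comm, hAcard]
  -- pick two non-conjugate coatoms and count
  have hbotne : (⊥ : Subgroup G) ≠ ⊤ := by
    intro h
    obtain ⟨x, hx⟩ := exists_ne (1 : G)
    apply hx
    have : x ∈ (⊥ : Subgroup G) := h ▸ Subgroup.mem_top x
    exact Subgroup.mem_bot.mp this
  obtain ⟨A₀, hA₀, -⟩ := (eq_top_or_exists_le_coatom (⊥ : Subgroup G)).resolve_left hbotne
  have hidx : ∀ A : Subgroup G, IsCoatom A → 2 ≤ A.index ∧ 2 * A.index ≤ Nat.card G := by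
    intro A hA
    have h0 : A.index ≠ 0 := Subgroup.index_ne_zero_of_finite
    have h1 : A.index ≠ 1 := by
      simp only [ne_eq, Subgroup.index_eq_one]
      exact hA.1
    have h2 : 2 ≤ Nat.card ↥A := by
      have := Subgroup.one_lt_card_iff_ne_bot (H := A) |>.mpr (hnonbot A hA)
      omega
    have h3 : Nat.card ↥A * A.index = Nat.card G := A.card_mul_index
    refine ⟨by omega, ?_⟩
    calc 2 * A.index ≤ Nat.card ↥A * A.index := Nat.mul_le_mul_right _ h2
    _ = Nat.card G := h3
  -- there is an element outside U A₀ ∪ {1}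
  have hexy : ∃ y : G, y ∉ U A₀ ∪ {1} := by
    by_contra h
    push_neg at h
    have hsub : (Set.univ : Set G) ⊆ U A₀ ∪ {1} := fun y _ => h y
    have h1 : (Set.univ : Set G).ncard ≤ (U A₀ ∪ {1}).ncard :=
      Set.ncard_le_ncard hsub (Set.toFinite _)
    have h2 : (U A₀ ∪ {1} : Set G).ncard ≤ (U A₀).ncard + 1 := by
      have := Set.ncard_union_le (U A₀) ({1} : Set G)
      simpa using this
    have h3 := hcardU A₀ hA₀
    have h4 := (hidx A₀ hA₀).1
    rw [Set.ncard_univ] at h1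
    omega
  obtain ⟨y₀, hy₀⟩ := hexy
  have hy₀ne : y₀ ≠ 1 := by
    intro h
    exact hy₀ (Set.mem_union_right _ (by rw [h]; rfl))
  have hy₀U : y₀ ∉ U A₀ := fun h => hy₀ (Set.mem_union_left _ h)
  obtain ⟨B₀, hB₀, hy₀B⟩ := hUC y₀ hy₀ne
  -- disjointness
  have hdisj : Disjoint (U A₀) (U B₀) := by
    rw [Set.disjoint_left]
    intro y hyA hyB
    rw [hmemU] at hyA hyB
    obtain ⟨⟨g, hg⟩, hyne⟩ := hyA
    obtain ⟨⟨h, hh⟩, -⟩ := hyB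
    have h1 : y ∈ cj g A₀ := mem_cj.mpr hg
    have h2 : y ∈ cj h B₀ := mem_cj.mpr hh
    have hcjeq : cj g A₀ = cj h B₀ := by
      by_contra hne'
      have := hTI _ _ (isCoatom_cj hA₀) (isCoatom_cj hB₀) hne'
      have hmem : y ∈ cj g A₀ ⊓ cj h B₀ := ⟨h1, h2⟩
      rw [this, Subgroup.mem_bot] at hmem
      exact hyne hmem
    have hB0 : B₀ = cj (h⁻¹ * g) A₀ := by
      rw [← cj_cj, hcjeq, cj_inv_cj]
    apply hy₀U
    rw [hmemU]
    refine ⟨⟨h⁻¹ * g, ?_⟩, hy₀ne⟩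
    rw [← mem_cj, ← hB0]
    exact hy₀B
  -- final count
  have hsub2 : U A₀ ∪ U B₀ ∪ {1} ⊆ (Set.univ : Set G) := Set.subset_univ _
  have hcount : (U A₀ ∪ U B₀ ∪ {1}).ncard = (U A₀).ncard + (U B₀).ncard + 1 := by
    rw [Set.ncard_union_eq (by
      rw [Set.disjoint_singleton_right]
      intro h
      rcases h with h | h
      exacts [hone A₀ h, hone B₀ h]) (Set.toFinite _) (Set.toFinite _),
      Set.ncard_union_eq hdisj (Set.toFinite _) (Set.toFinite _), Set.ncard_singleton]
  have hle : (U A₀ ∪ U B₀ ∪ {1}).ncard ≤ Nat.card G := by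
    have := Set.ncard_le_ncard hsub2 (Set.toFinite _)
    rwa [Set.ncard_univ] at this
  have hA0 := hcardU A₀ hA₀
  have hB0 := hcardU B₀ hB₀
  have hiA := hidx A₀ hA₀
  have hiB := hidx B₀ hB₀
  omega

lemma conj_smul_eq_cj (g : G) (H : Subgroup G) : MulAut.conj g • H = cj g H := by
  ext x
  rw [Subgroup.mem_pointwise_smul_iff_inv_smul_mem, mem_cj]
  have h : (MulAut.conj g)⁻¹ • x = g⁻¹ * x * g := MulAut.conj_inv_apply g x
  rw [h]

lemma map_subtype_cj {N : Subgroup G} (n : ↥N) (Q : Subgroup ↥N) :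
    (cj n Q).map N.subtype = cj (n : G) (Q.map N.subtype) := by
  ext x
  simp only [Subgroup.mem_map, mem_cj]
  constructor
  · rintro ⟨y, hy, rfl⟩
    refine ⟨n⁻¹ * y * n, hy, ?_⟩
    push_cast
    rfl
  · rintro ⟨z, hz, hze⟩
    refine ⟨n * z * n⁻¹, by
      have h : n⁻¹ * (n * z * n⁻¹) * n = z := by group
      rw [h]; exact hz, ?_⟩
    show ((n * z * n⁻¹ : ↥N) : G) = x
    push_cast
    rw [show ((z : ↥N) : G) = (n : G)⁻¹ * x * (n : G) from hze]
    group

lemma sylow_map_normalizer_eq [Finite G]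
    (hns : ∀ K : Subgroup G, K.Normal → K ≠ ⊥ → ¬ IsSolvable ↥K)
    {L : Subgroup G} (hL : IsCoatom L) (hLnil : Group.IsNilpotent ↥L)
    {r : ℕ} [hrp : Fact r.Prime] (S : Sylow r ↥L)
    (hbot : S.toSubgroup.map L.subtype ≠ ⊥) :
    normalizer ((S.toSubgroup.map L.subtype) : Set G) = L := by
  have hnorm := le_normalizer_map' (sylow_normal_of_nilpotent hLnil S)
  have hnt : normalizer ((S.toSubgroup.map L.subtype) : Set G) ≠ ⊤ := by
    intro htop
    haveI hn := Subgroup.normalizer_eq_top_iff.mp htop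
    exact not_pgroup_of_norm (hns _ hn hbot) hrp.out (S.isPGroup'.map L.subtype)
  exact normalizer_eq_of_coatom hL hnorm hnt

/-- Case II: there is a nontrivial proper normal subgroup. -/
lemma caseII [Finite G] (hG : ¬ IsSolvable G)
    (hns : ∀ K : Subgroup G, K.Normal → K ≠ ⊥ → ¬ IsSolvable ↥K)
    (hC : ∀ M : Subgroup G, IsCoatom M → Group.IsNilpotent ↥M ∨ M.Normal)
    {N : Subgroup G} (hNn : N.Normal) (hNbot : N ≠ ⊥) (hNtop : N ≠ ⊤)
    (hmin : ∀ K : Subgroup G, K.Normal → K ≠ ⊥ → K ≠ ⊤ →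
      Nat.card ↥K ≤ Nat.card ↥N → Nat.card ↥K = Nat.card ↥N) : False := by
  classical
  haveI := hNn
  have hN0 : Nat.card ↥N ≠ 0 := Nat.card_pos.ne'
  have hminN : ∀ K : Subgroup G, K.Normal → K ≠ ⊥ → K ≤ N → K = N := by
    intro K hKn hKb hKle
    have hKtop : K ≠ ⊤ := by
      rintro rfl
      exact hNtop (top_le_iff.mp hKle)
    have h := hmin K hKn hKb hKtop (Subgroup.card_le_of_le hKle)
    exact Subgroup.eq_of_le_of_card_ge hKle h.ge
  -- construction of the nilpotent coatoms L_p
  have hcons : ∀ p : ℕ, p.Prime → p ∣ Nat.card ↥N →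
      ∃ Lp : Subgroup G, IsCoatom Lp ∧ Group.IsNilpotent ↥Lp ∧ N ⊔ Lp = ⊤ ∧
        p ∣ Nat.card ↥(N ⊓ Lp) := by
    intro p hp hpd
    haveI : Fact p.Prime := ⟨hp⟩
    obtain P : Sylow p ↥N := default
    set PG := P.toSubgroup.map N.subtype with hPGdef
    have hPGN : PG ≤ N := Subgroup.map_subtype_le _
    have hPGcard : Nat.card ↥PG = p ^ (Nat.card ↥N).factorization p := by
      rw [hPGdef, card_map_subtype]
      exact P.card_eq_multiplicity
    have hPGbot : PG ≠ ⊥ := by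
      rw [← Subgroup.one_lt_card_iff_ne_bot, hPGcard]
      exact one_lt_pow₀ hp.one_lt (hp.factorization_pos_of_dvd hN0 hpd).ne'
    have hPGpg : IsPGroup p ↥PG := P.isPGroup'.map N.subtype
    have hfr : normalizer (PG : Set G) ⊔ N = ⊤ := Sylow.normalizer_sup_eq_top P
    have hnt : normalizer (PG : Set G) ≠ ⊤ := by
      intro htop
      have hPGnormal : PG.Normal := Subgroup.normalizer_eq_top_iff.mp htop
      have heq := hminN PG hPGnormal hPGbot hPGN
      apply not_pgroup_of_norm (hns N hNn hNbot) hp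
      rw [← heq]
      exact hPGpg
    obtain ⟨Lp, hLp, hLple⟩ := (eq_top_or_exists_le_coatom (normalizer (PG : Set G))).resolve_left hnt
    have hsup : N ⊔ Lp = ⊤ := by
      rw [← top_le_iff, ← hfr]
      exact sup_le (hLple.trans le_sup_right) le_sup_left
    have hNLp : ¬ N ≤ Lp := by
      intro h
      apply hLp.1
      rw [← top_le_iff, ← hsup]
      exact sup_le h le_rfl
    have hPGinf : PG ≤ N ⊓ Lp := le_inf hPGN (Subgroup.le_normalizer.trans hLple)
    have hLnotnormal : ¬ Lp.Normal := by
      intro hLn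
      have hKn : (N ⊓ Lp).Normal := by
        constructor
        intro x hx g
        exact ⟨hNn.conj_mem _ hx.1 g, hLn.conj_mem _ hx.2 g⟩
      have hKbot : N ⊓ Lp ≠ ⊥ := by
        intro h
        exact hPGbot (le_bot_iff.mp (h ▸ hPGinf))
      have := hminN (N ⊓ Lp) hKn hKbot inf_le_left
      exact hNLp (inf_eq_left.mp this)
    have hLnil := (hC Lp hLp).resolve_right hLnotnormal
    refine ⟨Lp, hLp, hLnil, hsup, ?_⟩
    calc p ∣ Nat.card ↥PG := by
          rw [hPGcard]
          exact dvd_pow_self p (hp.factorization_pos_of_dvd hN0 hpd).ne'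
    _ ∣ Nat.card ↥(N ⊓ Lp) := Subgroup.card_dvd_of_le hPGinf
  choose L hLco hLnil hLsup hLdvd using hcons
  -- index arithmetic
  have hc0 : N.index ≠ 0 := Subgroup.index_ne_zero_of_finite
  have hc1 : N.index ≠ 1 := by
    simp only [ne_eq, Subgroup.index_eq_one]
    exact hNtop
  have hGNc : Nat.card ↥N * N.index = Nat.card G := N.card_mul_index
  obtain ⟨r, hr, hrc⟩ := Nat.exists_prime_and_dvd hc1
  haveI : Fact r.Prime := ⟨hr⟩
  -- conjugate L's have equal intersection cardinalities
  have hconjT : ∀ (p₁ : ℕ) (h1p : p₁.Prime) (h1d : p₁ ∣ Nat.card ↥N)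
      (p₂ : ℕ) (h2p : p₂.Prime) (h2d : p₂ ∣ Nat.card ↥N) (g : G),
      L p₂ h2p h2d = cj g (L p₁ h1p h1d) →
      Nat.card ↥(N ⊓ L p₂ h2p h2d) = Nat.card ↥(N ⊓ L p₁ h1p h1d) := by
    intro p₁ h1p h1d p₂ h2p h2d g hLp
    rw [hLp]
    conv_lhs => rw [show N ⊓ cj g (L p₁ h1p h1d) = cj g (N ⊓ L p₁ h1p h1d) by
      rw [cj_inf, cj_eq_self_of_normal hNn]]
    rw [card_cj]
  -- the endgame: if all intersections have the same cardinality, contradiction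
  have endgame : ∀ (p₀ : ℕ) (hp₀p : p₀.Prime) (hp₀d : p₀ ∣ Nat.card ↥N),
      (∀ (p : ℕ) (hpp : p.Prime) (hpd : p ∣ Nat.card ↥N),
        Nat.card ↥(N ⊓ L p hpp hpd) = Nat.card ↥(N ⊓ L p₀ hp₀p hp₀d)) → False := by
    intro p₀ hp₀p hp₀d hall
    have htN : Nat.card ↥(N ⊓ L p₀ hp₀p hp₀d) ∣ Nat.card ↥N :=
      Subgroup.card_dvd_of_le inf_le_left
    have ht0 : Nat.card ↥(N ⊓ L p₀ hp₀p hp₀d) ≠ 0 := Nat.card_pos.ne'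
    have hNt : Nat.card ↥N ∣ Nat.card ↥(N ⊓ L p₀ hp₀p hp₀d) := by
      rw [← Nat.factorization_le_iff_dvd hN0 ht0, Finsupp.le_iff]
      intro q hq
      have hqp : q.Prime := Nat.prime_of_mem_primeFactors (by
        rwa [← Nat.support_factorization])
      have hqd : q ∣ Nat.card ↥N := Nat.dvd_of_mem_primeFactors (by
        rwa [← Nat.support_factorization])
      have hqt : q ∣ Nat.card ↥(N ⊓ L p₀ hp₀p hp₀d) := by
        have h := hLdvd q hqp hqd
        rwa [hall q hqp hqd] at h
      haveI : Fact q.Prime := ⟨hqp⟩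
      obtain ⟨Q, hQle, -⟩ := key3 hns hNbot (hLco p₀ hp₀p hp₀d) (hLnil p₀ hp₀p hp₀d) hqt
      have hQT : Q.toSubgroup.map N.subtype ≤ N ⊓ L p₀ hp₀p hp₀d :=
        le_inf (Subgroup.map_subtype_le _) hQle
      have hQcard : Nat.card ↥(Q.toSubgroup.map N.subtype) =
          q ^ (Nat.card ↥N).factorization q := by
        rw [card_map_subtype]
        exact Q.card_eq_multiplicity
      have hdvd2 : q ^ (Nat.card ↥N).factorization q ∣
          Nat.card ↥(N ⊓ L p₀ hp₀p hp₀d) := by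
        rw [← hQcard]
        exact Subgroup.card_dvd_of_le hQT
      exact (Nat.Prime.pow_dvd_iff_le_factorization hqp ht0).mp hdvd2
    have hle : Nat.card ↥N ≤ Nat.card ↥(N ⊓ L p₀ hp₀p hp₀d) :=
      Nat.le_of_dvd Nat.card_pos hNt
    have hTeq : N ⊓ L p₀ hp₀p hp₀d = N :=
      Subgroup.eq_of_le_of_card_ge inf_le_left hle
    have hNL0 : N ≤ L p₀ hp₀p hp₀d := inf_eq_left.mp hTeq
    apply hns N hNn hNbot
    haveI : Group.IsNilpotent ↥N := isNilpotent_of_le hNL0 (hLnil p₀ hp₀p hp₀d)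
    exact (inferInstance : Group.IsSolvable ↥N)
  -- branch on whether r divides |N|
  by_cases hrN : r ∣ Nat.card ↥N
  · by_cases hallr : ∀ (p : ℕ) (hpp : p.Prime) (hpd : p ∣ Nat.card ↥N),
        r ∣ Nat.card ↥(N ⊓ L p hpp hpd)
    · -- B1: all the L_p are conjugate via Sylow r-subgroups of N
      apply endgame r hr hrN
      intro p hpp hpd
      obtain ⟨Q0, hQ0le, hQ0n⟩ :=
        key3 hns hNbot (hLco r hr hrN) (hLnil r hr hrN) (hallr r hr hrN)
      obtain ⟨Qp, hQple, hQpn⟩ :=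
        key3 hns hNbot (hLco p hpp hpd) (hLnil p hpp hpd) (hallr p hpp hpd)
      obtain ⟨n, hn⟩ := MulAction.exists_smul_eq ↥N Q0 Qp
      have hcoe : (Qp : Subgroup ↥N) = cj (n : ↥N) (Q0 : Subgroup ↥N) := by
        rw [← hn, Sylow.coe_subgroup_smul, conj_smul_eq_cj]
      have hmap : Qp.toSubgroup.map N.subtype =
          cj ((n : ↥N) : G) (Q0.toSubgroup.map N.subtype) := by
        rw [hcoe, map_subtype_cj]
      refine hconjT r hr hrN p hpp hpd ((n : ↥N) : G) ?_
      rw [← hQpn, hmap, cj_normalizer, hQ0n]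
    · -- B2: direct contradiction via normalizer growth in a Sylow r-subgroup of G
      push_neg at hallr
      obtain ⟨p, hpp, hpd, hnd⟩ := hallr
      obtain S : Sylow r ↥(L p hpp hpd) := default
      have hcardL : Nat.card ↥(L p hpp hpd) =
          Nat.card ↥(N ⊓ L p hpp hpd) * N.index := card_inf_mul_index (hLsup p hpp hpd)
      have hvT : (Nat.card ↥(N ⊓ L p hpp hpd)).factorization r = 0 :=
        Nat.factorization_eq_zero_of_not_dvd hnd
      have hvL : (Nat.card ↥(L p hpp hpd)).factorization r = (N.index).factorization r := by
        rw [hcardL, Nat.factorization_mul Nat.card_pos.ne' hc0, Finsupp.add_apply, hvT,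
          zero_add]
      have hScard : Nat.card ↥(S.toSubgroup.map (L p hpp hpd).subtype) =
          r ^ (N.index).factorization r := by
        rw [card_map_subtype, S.card_eq_multiplicity, hvL]
      have hSbot : S.toSubgroup.map (L p hpp hpd).subtype ≠ ⊥ := by
        rw [← Subgroup.one_lt_card_iff_ne_bot, hScard]
        exact one_lt_pow₀ hr.one_lt (hr.factorization_pos_of_dvd hc0 hrc).ne'
      have hSn : normalizer ((S.toSubgroup.map (L p hpp hpd).subtype) : Set G) = L p hpp hpd :=
        sylow_map_normalizer_eq hns (hLco p hpp hpd) (hLnil p hpp hpd) S hSbot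
      obtain ⟨R, hR⟩ := (S.isPGroup'.map (L p hpp hpd).subtype).exists_le_sylow
      have hRcard : Nat.card ↥(R : Subgroup G) = r ^ (Nat.card G).factorization r :=
        R.card_eq_multiplicity
      have hvGr : (Nat.card G).factorization r =
          (Nat.card ↥N).factorization r + (N.index).factorization r := by
        rw [← hGNc, Nat.factorization_mul hN0 hc0, Finsupp.add_apply]
      have hlt : S.toSubgroup.map (L p hpp hpd).subtype < (R : Subgroup G) := by
        refine lt_of_le_of_ne hR ?_
        intro heq
        have hc := hScard
        rw [heq, hRcard, hvGr] at hc
        have := Nat.pow_right_injective hr.two_le hc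
        have hpos := hr.factorization_pos_of_dvd hN0 hrN
        omega
      have hRnil : Group.IsNilpotent ↥(R : Subgroup G) := R.isPGroup'.isNilpotent
      obtain ⟨x, hxR, hxS, hxn⟩ := exists_normalizer_growth hRnil hlt
      have hxL : x ∈ L p hpp hpd := by
        rw [← hSn]
        exact hxn
      have hzp : IsPGroup r ↥(Subgroup.zpowers x) :=
        IsPGroup.to_le R.isPGroup' (Subgroup.zpowers_le.mpr hxR)
      have hzS := pgroup_le_sylow_map (hLnil p hpp hpd) S
        (Subgroup.zpowers_le.mpr hxL) hzp
      exact hxS (hzS (Subgroup.mem_zpowers x))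
  · -- Arg A: r divides N.index but not |N|
    have hvN0 : (Nat.card ↥N).factorization r = 0 :=
      Nat.factorization_eq_zero_of_not_dvd hrN
    have hfull : ∀ (p : ℕ) (hpp : p.Prime) (hpd : p ∣ Nat.card ↥N),
        ∃ R : Sylow r G, (R : Subgroup G) ≤ L p hpp hpd ∧
          normalizer ((R : Subgroup G) : Set G) = L p hpp hpd := by
      intro p hpp hpd
      obtain S : Sylow r ↥(L p hpp hpd) := default
      have hcardL : Nat.card ↥(L p hpp hpd) =
          Nat.card ↥(N ⊓ L p hpp hpd) * N.index := card_inf_mul_index (hLsup p hpp hpd)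
      have hvT : (Nat.card ↥(N ⊓ L p hpp hpd)).factorization r = 0 := by
        apply Nat.factorization_eq_zero_of_not_dvd
        intro hdvd
        exact hrN (hdvd.trans (Subgroup.card_dvd_of_le inf_le_left))
      have hvL : (Nat.card ↥(L p hpp hpd)).factorization r = (N.index).factorization r := by
        rw [hcardL, Nat.factorization_mul Nat.card_pos.ne' hc0, Finsupp.add_apply, hvT,
          zero_add]
      have hvG : (Nat.card G).factorization r = (N.index).factorization r := by
        rw [← hGNc, Nat.factorization_mul hN0 hc0, Finsupp.add_apply, hvN0, zero_add]
      have hScard : Nat.card ↥(S.toSubgroup.map (L p hpp hpd).subtype) =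
          r ^ (Nat.card G).factorization r := by
        rw [card_map_subtype, S.card_eq_multiplicity, hvL, hvG]
      have hSbot : S.toSubgroup.map (L p hpp hpd).subtype ≠ ⊥ := by
        rw [← Subgroup.one_lt_card_iff_ne_bot, hScard, hvG]
        exact one_lt_pow₀ hr.one_lt (hr.factorization_pos_of_dvd hc0 hrc).ne'
      refine ⟨Sylow.ofCard _ hScard, ?_, ?_⟩
      · rw [Sylow.coe_ofCard]
        exact Subgroup.map_subtype_le _
      · rw [Sylow.coe_ofCard]
        exact sylow_map_normalizer_eq hns (hLco p hpp hpd) (hLnil p hpp hpd) S hSbot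
    have hcard1 : Nat.card ↥N ≠ 1 := by
      have := Subgroup.one_lt_card_iff_ne_bot (H := N) |>.mpr hNbot
      omega
    obtain ⟨p₀, hp₀p, hp₀d⟩ := Nat.exists_prime_and_dvd hcard1
    apply endgame p₀ hp₀p hp₀d
    intro p hpp hpd
    obtain ⟨R1, hR1le, hR1n⟩ := hfull p₀ hp₀p hp₀d
    obtain ⟨R2, hR2le, hR2n⟩ := hfull p hpp hpd
    obtain ⟨g, hg⟩ := MulAction.exists_smul_eq G R1 R2
    have hcoe : (R2 : Subgroup G) = cj g (R1 : Subgroup G) := by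
      rw [← hg, Sylow.coe_subgroup_smul, conj_smul_eq_cj]
    refine hconjT p₀ hp₀p hp₀d p hpp hpd g ?_
    rw [← hR2n, hcoe, cj_normalizer, hR1n]

universe u

lemma witness_exists : ∀ (n : ℕ) (G : Type u) [Group G] [Finite G],
    Nat.card G ≤ n → ¬ IsSolvable G →
    ∃ M : Subgroup G, IsCoatom M ∧ ¬ Group.IsNilpotent ↥M ∧ ¬ M.Normal := by
  intro n
  induction n with
  | zero =>
    intro G _ _ hle _
    have : 0 < Nat.card G := Nat.card_pos
    omega
  | succ n ih =>
    intro G _ _ hle hG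
    by_contra hno
    have hC : ∀ M : Subgroup G, IsCoatom M → Group.IsNilpotent ↥M ∨ M.Normal := by
      intro M hM
      by_contra h
      push_neg at h
      exact hno ⟨M, hM, h.1, h.2⟩
    -- Step 1: all proper quotients are solvable
    have hq : ∀ (K : Subgroup G) [K.Normal], K ≠ ⊥ → IsSolvable (G ⧸ K) := by
      intro K hKn hKb
      by_contra hq'
      have hcard : Nat.card (G ⧸ K) ≤ n := by
        have h1 : Nat.card G = Nat.card (G ⧸ K) * Nat.card ↥K :=
          Subgroup.card_eq_card_quotient_mul_card_subgroup K
        have h2 : 2 ≤ Nat.card ↥K := by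
          have := Subgroup.one_lt_card_iff_ne_bot (H := K) |>.mpr hKb
          omega
        have h3 : 0 < Nat.card (G ⧸ K) := Nat.card_pos
        have h4 : Nat.card (G ⧸ K) * 2 ≤ Nat.card G := by
          rw [h1]
          exact Nat.mul_le_mul_left _ h2
        omega
      obtain ⟨Mbar, hMbar, hMnil, hMnorm⟩ := ih (G ⧸ K) hcard hq'
      set M := Subgroup.comap (QuotientGroup.mk' K) Mbar with hMdef
      have hKM : K ≤ M := by
        intro x hx
        show QuotientGroup.mk' K x ∈ Mbar
        have hone : QuotientGroup.mk' K x = 1 := (QuotientGroup.eq_one_iff x).mpr hx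
        rw [hone]
        exact Mbar.one_mem
      have hmapM : Subgroup.map (QuotientGroup.mk' K) M = Mbar :=
        Subgroup.map_comap_eq_self_of_surjective (QuotientGroup.mk'_surjective K) _
      have hMco : IsCoatom M := by
        constructor
        · intro h
          apply hMbar.1
          rw [← hmapM, h]
          exact Subgroup.map_top_of_surjective _ (QuotientGroup.mk'_surjective K)
        · intro B hB
          have hKB : K ≤ B := hKM.trans hB.le
          have hMB : Mbar ≤ Subgroup.map (QuotientGroup.mk' K) B := by
            rw [← hmapM]
            exact Subgroup.map_mono hB.le
          have hne : Subgroup.map (QuotientGroup.mk' K) B ≠ Mbar := by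
            intro h
            apply hB.not_ge
            intro x hx
            rw [hMdef]
            apply Subgroup.mem_comap.mpr
            rw [← h]
            exact Subgroup.mem_map_of_mem _ hx
          have htop := hMbar.2 _ (lt_of_le_of_ne hMB (Ne.symm hne))
          have hcm : Subgroup.comap (QuotientGroup.mk' K)
              (Subgroup.map (QuotientGroup.mk' K) B) = B := by
            rw [Subgroup.comap_map_eq, QuotientGroup.ker_mk', sup_eq_left.mpr hKB]
          rw [htop, Subgroup.comap_top] at hcm
          exact hcm.symm
      rcases hC M hMco with hnil | hnorm
      · apply hMnil
        haveI := hnil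
        rw [← hmapM]
        exact nilpotent_of_surjective ((QuotientGroup.mk' K).subgroupMap M)
          (MonoidHom.subgroupMap_surjective _ _)
      · apply hMnorm
        rw [← hmapM]
        exact hnorm.map _ (QuotientGroup.mk'_surjective K)
    -- Step 2: nontrivial normal subgroups are non-solvable
    have hns : ∀ K : Subgroup G, K.Normal → K ≠ ⊥ → ¬ IsSolvable ↥K := by
      intro K hKn hKb hsol
      haveI := hKn
      haveI : Group.IsSolvable ↥K := hsol
      haveI : Group.IsSolvable (G ⧸ K) := hq K hKb
      apply hG
      refine solvable_of_ker_le_range K.subtype (QuotientGroup.mk' K) ?_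
      rw [QuotientGroup.ker_mk', Subgroup.range_subtype]
    by_cases hex : ∃ K : Subgroup G, K.Normal ∧ K ≠ ⊥ ∧ K ≠ ⊤
    · haveI : Finite (Subgroup G) :=
        Finite.of_injective (fun H : Subgroup G => (H : Set G)) SetLike.coe_injective
      obtain ⟨Nmin, hNS, hminwrt⟩ :=
        Set.Finite.exists_minimalFor (fun K : Subgroup G => Nat.card ↥K)
          {K : Subgroup G | K.Normal ∧ K ≠ ⊥ ∧ K ≠ ⊤} (Set.toFinite _) hex
      exact caseII hG hns hC hNS.1 hNS.2.1 hNS.2.2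
        (fun K hn hb ht hlt => le_antisymm hlt (hminwrt ⟨hn, hb, ht⟩ hlt))
    · push_neg at hex
      have hsimple : ∀ K : Subgroup G, K.Normal → K = ⊥ ∨ K = ⊤ := by
        intro K hK
        by_contra h
        push_neg at h
        exact h.2 (hex K hK h.1)
      exact caseI hG hsimple hC

end NSW

theorem stmt9 {G : Type*} [Group G] [Fintype G] (hG : ¬ IsSolvable G) :
    ∃ M : Subgroup G, IsCoatom M ∧ ¬ Group.IsNilpotent ↥M ∧ ¬ M.Normal :=
  NSW.witness_exists (Nat.card G) G le_rfl hG
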